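/- Let G be a graph containing an induced subgraph isomorphic to K_{1,t,k+1} (a vertex w adjacent to all vertices of t+1 disjoint cliques each of size k+1, with no edges between distinct cliques), where the only neighbors in G of the clique vertices are w and their own clique. Then for every set F of at most k edges of G, the contracted graph G/F contains an induced K_{1,t}. -/

import Mathlib

variable {V W : Type*}

/-- Contraction of a graph by a partition (setoid): two classes are adjacent
iff they are distinct and joined by an edge of `G`. -/
def contractQ (G : SimpleGraph V) (s : Setoid V) : SimpleGraph (Quotient s) where
  Adj x y := x ≠ y ∧ ∃ a b : V, Quotient.mk s a = x ∧ Quotient.mk s b = y ∧ G.Adj a b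
  symm := by
    constructor
    rintro x y ⟨hne, a, b, ha, hb, hab⟩
    exact ⟨hne.symm, b, a, hb, ha, hab.symm⟩
  loopless := by
    constructor
    rintro x ⟨hne, -⟩
    exact hne rfl

/-- The partition of the vertices induced by contracting a set `F` of edges of `G`. -/
def edgeSetoid (G : SimpleGraph V) (F : Set (Sym2 V)) : Setoid V :=
  Relation.EqvGen.setoid (fun a b => G.Adj a b ∧ s(a, b) ∈ F)

/-- The graph `G/F` obtained from `G` by contracting the edges in `F`. -/
def contractE (G : SimpleGraph V) (F : Set (Sym2 V)) :
    SimpleGraph (Quotient (edgeSetoid G F)) := contractQ G (edgeSetoid G F)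

/-- `G` contains an induced copy of `H`. -/
def HasInducedCopy (H : SimpleGraph W) (G : SimpleGraph V) : Prop :=
  ∃ f : W ↪ V, ∀ a b : W, H.Adj a b ↔ G.Adj (f a) (f b)

/-- `G` can be turned into an `H`-free graph by contracting at most `k` of its edges. -/
def ContractsToFree (G : SimpleGraph V) (k : ℕ) (H : SimpleGraph W) : Prop :=
  ∃ F : Finset (Sym2 V), ↑F ⊆ G.edgeSet ∧ F.card ≤ k ∧
    ¬ HasInducedCopy H (contractE G (↑F : Set (Sym2 V)))

/-- The cost of the partition given by a setoid: the sum over classes of (size - 1). -/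
noncomputable def setoidCost (s : Setoid V) : ℕ :=
  ∑ᶠ c : Quotient s, ({v : V | Quotient.mk s v = c}.ncard - 1)

/-- A vertex reachable from `w` but distinct from it has a neighbor strictly closer to `w`. -/
private lemma step_lemma (H : SimpleGraph V) (w a : V) (h : H.Reachable w a) (hne : a ≠ w) :
    ∃ x, H.Adj a x ∧ H.dist w x + 1 ≤ H.dist w a := by
  obtain ⟨p, hp⟩ := h.exists_walk_length_eq_dist
  obtain ⟨x, hadj, q, hq⟩ := SimpleGraph.Walk.exists_eq_cons_of_ne hne p.reverse
  refine ⟨x, hadj, ?_⟩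
  have h1 : H.dist w x ≤ q.reverse.length := SimpleGraph.dist_le _
  have h2 : q.length + 1 = p.length := by
    have := congrArg SimpleGraph.Walk.length hq
    simpa [SimpleGraph.Walk.length_reverse] using this.symm
  simp only [SimpleGraph.Walk.length_reverse] at h1
  omega

/-- At most `|F|` vertices other than `w` are reachable from `w` in `fromEdgeSet F`. -/
private lemma count_lemma (F : Finset (Sym2 V)) (w : V) (S : Finset V)
    (hS : ∀ a ∈ S, a ≠ w ∧ (SimpleGraph.fromEdgeSet (↑F : Set (Sym2 V))).Reachable w a) :
    S.card ≤ F.card := by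
  classical
  set H := SimpleGraph.fromEdgeSet (↑F : Set (Sym2 V)) with hH
  have key : ∀ a ∈ S, ∃ x, H.Adj a x ∧ H.dist w x + 1 ≤ H.dist w a := fun a ha =>
    step_lemma H w a (hS a ha).2 (hS a ha).1
  choose x hx hd using key
  apply Finset.card_le_card_of_injOn
    (fun a => if h : a ∈ S then s(a, x a h) else s(a, a))
  · intro a ha
    have ha' : a ∈ S := by simpa using ha
    simp only [ha', dif_pos]
    have := (SimpleGraph.mem_edgeSet H).mpr (hx a ha)
    rw [hH, SimpleGraph.edgeSet_fromEdgeSet] at this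
    exact this.1
  · intro a ha b hb hab
    simp only [Finset.mem_coe] at ha hb
    simp only [ha, hb, dif_pos] at hab
    by_contra hne
    rw [Sym2.eq_iff] at hab
    rcases hab with ⟨rfl, -⟩ | ⟨h1, h2⟩
    · exact hne rfl
    · have d1 := hd a ha
      have d2 := hd b hb
      rw [h2] at d1
      rw [← h1] at d2
      omega

/-- Classes of `edgeSetoid` are connected components of `fromEdgeSet F`. -/
private lemma eqv_iff (G : SimpleGraph V) (F : Finset (Sym2 V)) (hF : ↑F ⊆ G.edgeSet)
    (a b : V) :
    Quotient.mk (edgeSetoid G (↑F : Set (Sym2 V))) a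
      = Quotient.mk (edgeSetoid G (↑F : Set (Sym2 V))) b
    ↔ (SimpleGraph.fromEdgeSet (↑F : Set (Sym2 V))).Reachable a b := by
  constructor
  · intro h
    have h' : Relation.EqvGen (fun a b => G.Adj a b ∧ s(a, b) ∈ (↑F : Set (Sym2 V))) a b :=
      Quotient.exact h
    clear h
    induction h' with
    | rel x y hxy => exact ((SimpleGraph.fromEdgeSet_adj _).mpr ⟨hxy.2, hxy.1.ne⟩).reachable
    | refl x => exact SimpleGraph.Reachable.refl x
    | symm x y _ ih => exact ih.symm
    | trans x y z _ _ ih1 ih2 => exact ih1.trans ih2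
  · intro h
    apply Quotient.sound
    obtain ⟨p⟩ := h
    show Relation.EqvGen _ a b
    induction p with
    | nil => exact Relation.EqvGen.refl _
    | @cons u v c hadj q ih =>
        have hmem : s(u, v) ∈ (↑F : Set (Sym2 V)) := ((SimpleGraph.fromEdgeSet_adj _).mp hadj).1
        exact Relation.EqvGen.trans _ _ _
          (Relation.EqvGen.rel _ _ ⟨G.mem_edgeSet.mp (hF hmem), hmem⟩) ih

/-- Walks in `fromEdgeSet F` starting from a clique vertex not reachable from `w`
stay inside the clique. -/
private lemma walk_subset (G : SimpleGraph V) (F : Finset (Sym2 V)) (hF : ↑F ⊆ G.edgeSet)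
    (w : V) (C : Finset V)
    (hnbr : ∀ a ∈ C, ∀ u : V, G.Adj a u → u = w ∨ u ∈ C) :
    ∀ (a b : V) (_ : (SimpleGraph.fromEdgeSet (↑F : Set (Sym2 V))).Walk a b),
      a ∈ C → ¬ (SimpleGraph.fromEdgeSet (↑F : Set (Sym2 V))).Reachable w a →
      b ∈ C ∧ ¬ (SimpleGraph.fromEdgeSet (↑F : Set (Sym2 V))).Reachable w b := by
  intro a b p
  induction p with
  | nil => exact fun h1 h2 => ⟨h1, h2⟩
  | @cons u x v hadj q ih =>
      intro hu hwu
      have hGux : G.Adj u x := G.mem_edgeSet.mp (hF ((SimpleGraph.fromEdgeSet_adj _).mp hadj).1)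
      have hxC : x ∈ C := by
        rcases hnbr u hu x hGux with rfl | hx
        · exact absurd hadj.symm.reachable hwu
        · exact hx
      have hwx : ¬ (SimpleGraph.fromEdgeSet (↑F : Set (Sym2 V))).Reachable w x :=
        fun hr => hwu (hr.trans hadj.symm.reachable)
      exact ih hxC hwx

/-- If `G` contains an induced `K_{1,t,k+1}` (a vertex `w` adjacent to all
vertices of `t+1` disjoint cliques of size `k+1`, with no edges between distinct cliques),
where the only neighbors of the clique vertices are `w` and their own clique, then for
every set `F` of at most `k` edges of `G`, the graph `G/F` contains an induced `K_{1,t}`. -/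
theorem contract_contains_star {V : Type*} (G : SimpleGraph V) (t k : ℕ) (ht : 2 ≤ t)
    (w : V) (C : Fin (t + 1) → Finset V)
    (hdisj : ∀ i j, i ≠ j → Disjoint (C i) (C j))
    (hcard : ∀ i, (C i).card = k + 1)
    (hw : ∀ i, w ∉ C i)
    (hclique : ∀ i, ∀ a ∈ C i, ∀ b ∈ C i, a ≠ b → G.Adj a b)
    (hwadj : ∀ i, ∀ a ∈ C i, G.Adj w a)
    (hnbr : ∀ i, ∀ a ∈ C i, ∀ u : V, G.Adj a u → u = w ∨ u ∈ C i) :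
    ∀ F : Finset (Sym2 V), ↑F ⊆ G.edgeSet → F.card ≤ k →
      ∃ (c : Quotient (edgeSetoid G (↑F : Set (Sym2 V))))
        (L : Finset (Quotient (edgeSetoid G (↑F : Set (Sym2 V))))),
        L.card = t ∧ c ∉ L ∧
        (∀ l ∈ L, (contractE G (↑F : Set (Sym2 V))).Adj c l) ∧
        ∀ l₁ ∈ L, ∀ l₂ ∈ L, l₁ ≠ l₂ → ¬ (contractE G (↑F : Set (Sym2 V))).Adj l₁ l₂ := by
  intro F hF hFk
  classical
  set H := SimpleGraph.fromEdgeSet (↑F : Set (Sym2 V)) with hHdef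
  set mk : V → Quotient (edgeSetoid G (↑F : Set (Sym2 V))) :=
    Quotient.mk (edgeSetoid G (↑F : Set (Sym2 V))) with hmk
  -- pick in each clique a vertex not reachable from w
  have hchoice : ∀ i : Fin (t + 1), ∃ a ∈ C i, ¬ H.Reachable w a := by
    intro i
    by_contra hcon
    push_neg at hcon
    have hle : (C i).card ≤ F.card :=
      count_lemma F w (C i) (fun a ha => ⟨fun h => hw i (h ▸ ha), hcon a ha⟩)
    rw [hcard i] at hle
    omega
  choose a hamem hanr using hchoice
  -- membership in the same class as `a i` forces membership in `C i`
  have hsub : ∀ (i : Fin (t + 1)) (b : V), mk b = mk (a i) →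
      b ∈ C i ∧ ¬ H.Reachable w b := by
    intro i b hb
    have hr : H.Reachable (a i) b := ((eqv_iff G F hF b (a i)).mp hb).symm
    obtain ⟨p⟩ := hr
    exact walk_subset G F hF w (C i) (hnbr i) (a i) b p (hamem i) (hanr i)
  refine ⟨mk w, Finset.image (fun j : Fin t => mk (a j.castSucc)) Finset.univ, ?_, ?_, ?_, ?_⟩
  · -- card
    rw [Finset.card_image_of_injective _ ?_, Finset.card_univ, Fintype.card_fin]
    intro i j hij
    by_contra hne
    have h1 := (hsub j.castSucc (a i.castSucc) hij).1
    have h2 := hamem i.castSucc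
    exact (Finset.disjoint_left.mp
      (hdisj _ _ (fun h => hne (Fin.castSucc_injective t h))) h2) h1
  · -- c ∉ L
    intro hmem
    obtain ⟨j, -, hj⟩ := Finset.mem_image.mp hmem
    exact hw j.castSucc (hsub j.castSucc w hj.symm).1
  · -- adjacency to the center
    intro l hl
    obtain ⟨j, -, rfl⟩ := Finset.mem_image.mp hl
    refine ⟨?_, w, a j.castSucc, rfl, rfl, hwadj _ _ (hamem _)⟩
    intro hEq
    exact hanr j.castSucc ((eqv_iff G F hF w (a j.castSucc)).mp hEq)
  · -- independence of the leaves
    intro l₁ hl₁ l₂ hl₂ hne hadj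
    obtain ⟨i, -, rfl⟩ := Finset.mem_image.mp hl₁
    obtain ⟨j, -, rfl⟩ := Finset.mem_image.mp hl₂
    have hij : i.castSucc ≠ j.castSucc := by
      intro h
      exact hne (by rw [h])
    obtain ⟨-, x, y, hx, hy, hxy⟩ := hadj
    obtain ⟨hxC, hxw⟩ := hsub i.castSucc x hx
    obtain ⟨hyC, hyw⟩ := hsub j.castSucc y hy
    rcases hnbr i.castSucc x hxC y hxy with rfl | hyCi
    · exact hyw (SimpleGraph.Reachable.refl _)
    · exact (Finset.disjoint_left.mp (hdisj _ _ hij) hyCi) hyC
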